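/- arXiv:1301.1954 — 4 statements merged into one kernel-verified Lean document; each statement's English description precedes it below -/
import Mathlib

section
/- Let X, Y ∈ R^{m×n}. Then the Procrustean fitting-error satisfies ε²(X,Y) := inf{‖QX − Y‖_F² : Q ∈ R^{m×m}, QᵀQ = I_m} = ‖X‖_F² + ‖Y‖_F² − 2·Σ_{i=1}^{m} σ_i(YXᵀ), and the infimum is attained by some orthogonal matrix Q. -/
open Matrix MeasureTheory ProbabilityTheory Filter Finset
open scoped BigOperators Topology

noncomputable section

/-- i-th largest eigenvalue (descending order, `λ_i`) of a real square matrix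
(junk value 0 if the matrix is not symmetric). -/
def eigsDesc {m : ℕ} (M : Matrix (Fin m) (Fin m) ℝ) : Fin m → ℝ :=
  if h : M.IsHermitian then
    fun i => (h.eigenvalues ∘ Tuple.sort h.eigenvalues) i.rev
  else 0

/-- i-th largest singular value of a real square matrix:  `σ_i(C) = √(λ_i(CᵀC))`. -/
def svals {m : ℕ} (C : Matrix (Fin m) (Fin m) ℝ) : Fin m → ℝ :=
  fun i => Real.sqrt (eigsDesc (Cᵀ * C) i)

/-- squared Frobenius norm -/
def frobSq {m n : ℕ} (C : Matrix (Fin m) (Fin n) ℝ) : ℝ :=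
  ∑ i, ∑ j, (C i j) ^ 2

/-- Frobenius norm -/
def frobNorm {m n : ℕ} (C : Matrix (Fin m) (Fin n) ℝ) : ℝ :=
  Real.sqrt (frobSq C)

lemma frobSq_eq_trace {m n : ℕ} (C : Matrix (Fin m) (Fin n) ℝ) :
    frobSq C = (Cᵀ * C).trace := by
  simp [frobSq, Matrix.trace, Matrix.diag, Matrix.mul_apply, sq]
  rw [Finset.sum_comm]

lemma expand {m n : ℕ} (X Y : Matrix (Fin m) (Fin n) ℝ) (Q : Matrix (Fin m) (Fin m) ℝ)
    (hQ : Qᵀ * Q = 1) :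
    frobSq (Q * X - Y) = frobSq X + frobSq Y - 2 * (Qᵀ * (Y * Xᵀ)).trace := by
  rw [frobSq_eq_trace, frobSq_eq_trace, frobSq_eq_trace]
  have h1 : (Q * X - Y)ᵀ * (Q * X - Y)
      = Xᵀ * (Qᵀ * Q) * X - (Q * X)ᵀ * Y - Yᵀ * (Q * X) + Yᵀ * Y := by
    simp only [Matrix.sub_mul, Matrix.mul_sub, Matrix.transpose_sub, Matrix.transpose_mul]
    simp only [Matrix.mul_assoc, neg_one_smul]
    abel
  rw [h1, hQ, Matrix.mul_one]
  have h2 : ((Q * X)ᵀ * Y).trace = (Qᵀ * (Y * Xᵀ)).trace := by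
    rw [Matrix.transpose_mul, Matrix.mul_assoc, Matrix.trace_mul_comm, Matrix.mul_assoc]
  have h3 : (Yᵀ * (Q * X)).trace = (Qᵀ * (Y * Xᵀ)).trace := by
    rw [← Matrix.trace_transpose (Yᵀ * (Q * X)), Matrix.transpose_mul, Matrix.transpose_transpose,
      h2]
  rw [Matrix.trace_add, Matrix.trace_sub, Matrix.trace_sub, h2, h3]
  ring

lemma dot_mulVec_self {m n : ℕ} (M : Matrix (Fin m) (Fin n) ℝ) (x : Fin n → ℝ) :
    (M *ᵥ x) ⬝ᵥ (M *ᵥ x) = x ⬝ᵥ ((Mᵀ * M) *ᵥ x) := by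
  rw [← Matrix.mulVec_mulVec, Matrix.dotProduct_mulVec x, Matrix.vecMul_transpose]

lemma polar_decomp {m : ℕ} (A P : Matrix (Fin m) (Fin m) ℝ)
    (hPt : Pᵀ = P) (hPP : P * P = Aᵀ * A) :
    ∃ W : Matrix (Fin m) (Fin m) ℝ, Wᵀ * W = 1 ∧ W * P = A := by
  classical
  let p : EuclideanSpace ℝ (Fin m) →ₗ[ℝ] EuclideanSpace ℝ (Fin m) := Matrix.toEuclideanLin P
  let f : EuclideanSpace ℝ (Fin m) →ₗ[ℝ] EuclideanSpace ℝ (Fin m) := Matrix.toEuclideanLin A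
  have happ : ∀ (M : Matrix (Fin m) (Fin m) ℝ) (x : EuclideanSpace ℝ (Fin m)),
      Matrix.toEuclideanLin M x = (WithLp.equiv 2 (Fin m → ℝ)).symm (M *ᵥ (WithLp.equiv 2 (Fin m → ℝ)) x) :=
    fun M x => Matrix.toEuclideanLin_apply M x
  have hinner : ∀ x : EuclideanSpace ℝ (Fin m), (inner ℝ (p x) (p x) : ℝ) = inner ℝ (f x) (f x) := by
    intro x
    rw [happ, happ]
    simp only [PiLp.inner_apply, RCLike.inner_apply, starRingEnd_apply, star_trivial,
      WithLp.equiv_symm_apply, PiLp.toLp_apply]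
    have := congrArg (fun B => ((WithLp.equiv 2 (Fin m → ℝ)) x) ⬝ᵥ (B *ᵥ ((WithLp.equiv 2 (Fin m → ℝ)) x))) hPP
    have h1 := dot_mulVec_self P ((WithLp.equiv 2 (Fin m → ℝ)) x)
    have h2 := dot_mulVec_self A ((WithLp.equiv 2 (Fin m → ℝ)) x)
    rw [hPt] at h1
    simp only [dotProduct] at h1 h2 this ⊢
    rw [h1, this, ← h2]
  have hnorm : ∀ x : EuclideanSpace ℝ (Fin m), ‖p x‖ = ‖f x‖ := by
    intro x
    have := hinner x
    rw [real_inner_self_eq_norm_sq, real_inner_self_eq_norm_sq] at this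
    nlinarith [norm_nonneg (p x), norm_nonneg (f x)]
  -- kernel inclusion
  have hle : LinearMap.ker p ≤ LinearMap.ker f := by
    intro x hx
    rw [LinearMap.mem_ker] at hx ⊢
    have := hnorm x
    rw [hx, norm_zero] at this
    exact norm_eq_zero.mp this.symm
  -- isometry on the range of p
  let q : (EuclideanSpace ℝ (Fin m) ⧸ LinearMap.ker p) →ₗ[ℝ] EuclideanSpace ℝ (Fin m) :=
    (LinearMap.ker p).liftQ f hle
  let e := LinearMap.quotKerEquivRange p
  let L0 : LinearMap.range p →ₗ[ℝ] EuclideanSpace ℝ (Fin m) := q ∘ₗ e.symm.toLinearMap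
  have hL0 : ∀ (x : EuclideanSpace ℝ (Fin m)) (h : p x ∈ LinearMap.range p),
      L0 ⟨p x, h⟩ = f x := by
    intro x h
    have h1 : e.symm ⟨p x, h⟩ = Submodule.Quotient.mk x :=
      LinearMap.quotKerEquivRange_symm_apply_image p x h
    simp only [L0, LinearMap.comp_apply, LinearEquiv.coe_toLinearMap, h1]
    exact Submodule.liftQ_apply _ f x
  have hL0norm : ∀ y : LinearMap.range p, ‖L0 y‖ = ‖y‖ := by
    rintro ⟨y, hy⟩
    obtain ⟨x, rfl⟩ := hy
    rw [hL0 x (LinearMap.mem_range_self p x)]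
    exact ((hnorm x).symm).trans rfl
  let L : LinearMap.range p →ₗᵢ[ℝ] EuclideanSpace ℝ (Fin m) := ⟨L0, hL0norm⟩
  let g := L.extend
  have hg : ∀ x : EuclideanSpace ℝ (Fin m), g (p x) = f x := by
    intro x
    exact (L.extend_apply ⟨p x, LinearMap.mem_range_self p x⟩).trans
      (hL0 x (LinearMap.mem_range_self p x))
  -- extract the matrix
  let W : Matrix (Fin m) (Fin m) ℝ :=
    (Matrix.toEuclideanLin (𝕜 := ℝ) (m := Fin m) (n := Fin m)).symm g.toLinearMap
  have hWlin : Matrix.toEuclideanLin W = g.toLinearMap := by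
    simp [W]
  have hWapp : ∀ x : EuclideanSpace ℝ (Fin m), Matrix.toEuclideanLin W x = g x := by
    intro x; rw [hWlin]; rfl
  have hWmulVec : ∀ v : Fin m → ℝ,
      W *ᵥ v = (WithLp.equiv 2 (Fin m → ℝ)) (g ((WithLp.equiv 2 (Fin m → ℝ)).symm v)) := by
    intro v
    have := hWapp ((WithLp.equiv 2 (Fin m → ℝ)).symm v)
    rw [happ] at this
    simpa using congrArg (WithLp.equiv 2 (Fin m → ℝ)) this
  refine ⟨W, ?_, ?_⟩
  · -- orthogonality
    ext i j
    have hcol : ∀ j : Fin m, W *ᵥ Pi.single j 1 = fun k => W k j := by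
      intro j; rw [Matrix.mulVec_single]; funext k; exact mul_one _
    have hinn := g.inner_map_map ((WithLp.equiv 2 (Fin m → ℝ)).symm (Pi.single i 1))
      ((WithLp.equiv 2 (Fin m → ℝ)).symm (Pi.single j 1))
    simp only [PiLp.inner_apply, RCLike.inner_apply, starRingEnd_apply, star_trivial,
      WithLp.equiv_symm_apply, PiLp.toLp_apply] at hinn
    have hgi := hWmulVec (Pi.single i 1)
    have hgj := hWmulVec (Pi.single j 1)
    rw [hcol i] at hgi
    rw [hcol j] at hgj
    have hgieq : ∀ k, g ((WithLp.equiv 2 (Fin m → ℝ)).symm (Pi.single i 1)) k = W k i := by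
      intro k; exact (congrFun hgi k).symm
    have hgjeq : ∀ k, g ((WithLp.equiv 2 (Fin m → ℝ)).symm (Pi.single j 1)) k = W k j := by
      intro k; exact (congrFun hgj k).symm
    simp only [WithLp.equiv_symm_apply] at hgieq hgjeq
    simp only [hgieq, hgjeq] at hinn
    rw [Matrix.mul_apply]
    simp only [Matrix.transpose_apply, Matrix.one_apply]
    rw [Finset.sum_congr rfl (fun k _ => mul_comm (W k i) (W k j)), hinn]
    simp [Pi.single_apply, Finset.sum_ite_eq', eq_comm]
  · -- W * P = A
    have key : ∀ v : Fin m → ℝ, (W * P) *ᵥ v = A *ᵥ v := by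
      intro v
      rw [← Matrix.mulVec_mulVec, hWmulVec]
      have hp : (WithLp.equiv 2 (Fin m → ℝ)).symm (P *ᵥ v)
          = p ((WithLp.equiv 2 (Fin m → ℝ)).symm v) := by
        rw [happ]; simp
      rw [hp, hg]
      rw [happ]; simp
    ext i j
    have := congrFun (key (Pi.single j 1)) i
    simpa [Matrix.mulVec_single] using this

lemma trace_key {m : ℕ} (A : Matrix (Fin m) (Fin m) ℝ) :
    ∃ W : Matrix (Fin m) (Fin m) ℝ, Wᵀ * W = 1 ∧
      (Wᵀ * A).trace = ∑ i, svals A i ∧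
      ∀ Q : Matrix (Fin m) (Fin m) ℝ, Qᵀ * Q = 1 → (Qᵀ * A).trace ≤ ∑ i, svals A i := by
  classical
  have hAH : ∀ (B : Matrix (Fin m) (Fin m) ℝ), Bᴴ = Bᵀ := fun B =>
    Matrix.conjTranspose_eq_transpose_of_trivial B
  have hH : (Aᵀ * A).IsHermitian := by
    rw [← hAH]; exact Matrix.isHermitian_conjTranspose_mul_self A
  set μ := hH.eigenvalues with hμ
  have hμ0 : ∀ i, 0 ≤ μ i := by
    intro i
    have hpsd : (Aᵀ * A).PosSemidef := by
      rw [← hAH]; exact Matrix.posSemidef_conjTranspose_mul_self A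
    exact hpsd.eigenvalues_nonneg i
  set V : Matrix (Fin m) (Fin m) ℝ := (hH.eigenvectorUnitary : Matrix (Fin m) (Fin m) ℝ) with hV
  have hstar : star V = Vᵀ := by rw [Matrix.star_eq_conjTranspose, hAH]
  have hVtV : Vᵀ * V = 1 := by
    rw [← hstar]; exact Unitary.coe_star_mul_self hH.eigenvectorUnitary
  have hVVt : V * Vᵀ = 1 := by
    rw [← hstar]; exact Unitary.coe_mul_star_self hH.eigenvectorUnitary
  have spectral : Aᵀ * A = V * Matrix.diagonal μ * Vᵀ := by
    have := hH.spectral_theorem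
    rw [Unitary.conjStarAlgAut_apply, ← hV] at this
    rwa [hstar, show (RCLike.ofReal ∘ μ : Fin m → ℝ) = μ from funext fun i => rfl] at this
  set P : Matrix (Fin m) (Fin m) ℝ :=
    V * Matrix.diagonal (fun i => Real.sqrt (μ i)) * Vᵀ with hPdef
  have hPt : Pᵀ = P := by
    rw [hPdef, Matrix.transpose_mul, Matrix.transpose_mul, Matrix.transpose_transpose,
      Matrix.diagonal_transpose, Matrix.mul_assoc]
  have hdd : Matrix.diagonal (fun i => Real.sqrt (μ i)) *
      Matrix.diagonal (fun i => Real.sqrt (μ i)) = Matrix.diagonal μ := by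
    rw [Matrix.diagonal_mul_diagonal]
    exact congrArg _ (funext fun i => Real.mul_self_sqrt (hμ0 i))
  have hPP : P * P = Aᵀ * A := by
    calc P * P = V * (Matrix.diagonal (fun i => Real.sqrt (μ i)) * ((Vᵀ * V) *
          (Matrix.diagonal (fun i => Real.sqrt (μ i)) * Vᵀ))) := by
          simp only [hPdef, Matrix.mul_assoc]
      _ = V * (Matrix.diagonal (fun i => Real.sqrt (μ i)) *
          (Matrix.diagonal (fun i => Real.sqrt (μ i)) * Vᵀ)) := by rw [hVtV, Matrix.one_mul]
      _ = V * Matrix.diagonal μ * Vᵀ := by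
          simp only [← Matrix.mul_assoc]
          rw [Matrix.mul_assoc V, hdd]
      _ = Aᵀ * A := spectral.symm
  -- sum of singular values
  have hsum : ∑ i, svals A i = ∑ i, Real.sqrt (μ i) := by
    have h1 : ∀ i : Fin m, svals A i
        = Real.sqrt (μ ((Fin.revPerm.trans (Tuple.sort μ)) i)) := by
      intro i
      simp only [svals, eigsDesc, dif_pos hH]
      rfl
    rw [Finset.sum_congr rfl (fun i _ => h1 i)]
    exact Equiv.sum_comp (Fin.revPerm.trans (Tuple.sort μ)) (fun j => Real.sqrt (μ j))
  -- trace of P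
  have htrP : P.trace = ∑ i, Real.sqrt (μ i) := by
    rw [hPdef, Matrix.trace_mul_cycle, hVtV, Matrix.one_mul,
      Matrix.trace_diagonal]
  -- the upper bound
  have hbound : ∀ R : Matrix (Fin m) (Fin m) ℝ, Rᵀ * R = 1 →
      (R * P).trace ≤ ∑ i, Real.sqrt (μ i) := by
    intro R hR
    set M : Matrix (Fin m) (Fin m) ℝ := Vᵀ * R * V with hM
    have hMo : Mᵀ * M = 1 := by
      rw [hM, Matrix.transpose_mul, Matrix.transpose_mul, Matrix.transpose_transpose]
      calc Vᵀ * (Rᵀ * Vᵀᵀ) * (Vᵀ * R * V) = Vᵀ * (Rᵀ * ((V * Vᵀ) * (R * V))) := by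
            simp only [Matrix.transpose_transpose, Matrix.mul_assoc]
        _ = Vᵀ * ((Rᵀ * R) * V) := by
              rw [hVVt, Matrix.one_mul]
              simp only [Matrix.mul_assoc]
        _ = 1 := by rw [hR, Matrix.one_mul, hVtV]
    have hdiag : ∀ i, M i i ≤ 1 := by
      intro i
      have h1 : (Mᵀ * M) i i = 1 := by rw [hMo, Matrix.one_apply_eq]
      rw [Matrix.mul_apply] at h1
      simp only [Matrix.transpose_apply] at h1
      have h2 : (M i i) * (M i i) ≤ ∑ k, M k i * M k i :=
        Finset.single_le_sum (fun k _ => mul_self_nonneg (M k i)) (Finset.mem_univ i)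
      rw [h1] at h2
      nlinarith
    have htr : (R * P).trace = ∑ i, M i i * Real.sqrt (μ i) := by
      have : R * P = V * (M * Matrix.diagonal (fun i => Real.sqrt (μ i))) * Vᵀ := by
        rw [hM, hPdef]
        calc R * (V * Matrix.diagonal (fun i => Real.sqrt (μ i)) * Vᵀ)
            = (R * V) * Matrix.diagonal (fun i => Real.sqrt (μ i)) * Vᵀ := by
              simp only [Matrix.mul_assoc]
          _ = (V * (Vᵀ * R * V)) * Matrix.diagonal (fun i => Real.sqrt (μ i)) * Vᵀ := by
              rw [show V * (Vᵀ * R * V) = (V * Vᵀ) * R * V by simp only [Matrix.mul_assoc],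
                hVVt, Matrix.one_mul]
          _ = V * ((Vᵀ * R * V) * Matrix.diagonal (fun i => Real.sqrt (μ i))) * Vᵀ := by
              simp only [Matrix.mul_assoc]
      rw [this, Matrix.trace_mul_cycle, ← Matrix.mul_assoc, hVtV, Matrix.one_mul]
      rw [Matrix.trace]
      simp only [Matrix.diag_apply, Matrix.mul_diagonal]
    rw [htr]
    apply Finset.sum_le_sum
    intro i _
    calc M i i * Real.sqrt (μ i) ≤ 1 * Real.sqrt (μ i) :=
          mul_le_mul_of_nonneg_right (hdiag i) (Real.sqrt_nonneg _)
      _ = Real.sqrt (μ i) := one_mul _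
  -- assemble
  obtain ⟨W, hW1, hWP⟩ := polar_decomp A P hPt hPP
  have hWWt : W * Wᵀ = 1 := mul_eq_one_comm.mp hW1
  refine ⟨W, hW1, ?_, ?_⟩
  · have : Wᵀ * A = P := by
      rw [← hWP, ← Matrix.mul_assoc, hW1, Matrix.one_mul]
    rw [this, hsum, htrP]
  · intro Q hQ
    have hQQt : Q * Qᵀ = 1 := mul_eq_one_comm.mp hQ
    have hR : (Qᵀ * W)ᵀ * (Qᵀ * W) = 1 := by
      rw [Matrix.transpose_mul, Matrix.transpose_transpose]
      calc Wᵀ * Q * (Qᵀ * W) = Wᵀ * ((Q * Qᵀ) * W) := by simp only [Matrix.mul_assoc]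
        _ = 1 := by rw [hQQt, Matrix.one_mul, hW1]
    have : Qᵀ * A = (Qᵀ * W) * P := by rw [← hWP, Matrix.mul_assoc]
    rw [this, hsum]
    exact hbound (Qᵀ * W) hR

/-- The Procrustean fitting-error
`ε²(X,Y) = inf{‖QX − Y‖_F² : QᵀQ = I}` equals
`‖X‖_F² + ‖Y‖_F² − 2·Σ_i σ_i(YXᵀ)`, and the infimum is attained
by some orthogonal matrix `Q`. -/
theorem procrustes_error_formula (m n : ℕ) (X Y : Matrix (Fin m) (Fin n) ℝ) :
    sInf {e : ℝ | ∃ Q : Matrix (Fin m) (Fin m) ℝ, Qᵀ * Q = 1 ∧ e = frobSq (Q * X - Y)}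
        = frobSq X + frobSq Y - 2 * ∑ i : Fin m, svals (Y * Xᵀ) i
    ∧ ∃ Q : Matrix (Fin m) (Fin m) ℝ, Qᵀ * Q = 1 ∧
        frobSq (Q * X - Y)
          = sInf {e : ℝ | ∃ Q' : Matrix (Fin m) (Fin m) ℝ,
              Q'ᵀ * Q' = 1 ∧ e = frobSq (Q' * X - Y)} := by
  classical
  set S := {e : ℝ | ∃ Q : Matrix (Fin m) (Fin m) ℝ, Qᵀ * Q = 1 ∧ e = frobSq (Q * X - Y)} with hS
  set c := frobSq X + frobSq Y - 2 * ∑ i : Fin m, svals (Y * Xᵀ) i with hc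
  obtain ⟨W, hW1, htr, hbound⟩ := trace_key (Y * Xᵀ)
  have hWval : frobSq (W * X - Y) = c := by
    rw [expand X Y W hW1, htr]
  have hmem : c ∈ S := ⟨W, hW1, hWval.symm⟩
  have hlb : ∀ e ∈ S, c ≤ e := by
    rintro e ⟨Q, hQ, rfl⟩
    rw [expand X Y Q hQ]
    have := hbound Q hQ
    simp only [hc]
    linarith
  have hInf : sInf S = c :=
    le_antisymm (csInf_le ⟨c, hlb⟩ hmem) (le_csInf ⟨c, hmem⟩ hlb)
  exact ⟨hInf, W, hW1, by rw [hInf, hWval]⟩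
end
end

section
/- Let P, Q ∈ R^{m×m} be orthogonal projection matrices of rank k, and let C ∈ R^{m×m} be a matrix with Σ_{j=1}^k σ_j(C) > 0. Then the weighted square Hausdorff distance ð²(P,Q;C) := Σ_{i=1}^k 2·(1 − σ_i(P C Q)/((1/k)·Σ_{j=1}^k σ_j(C))) satisfies 0 ≤ ð²(P,Q;C) ≤ 2k. -/
open Matrix MeasureTheory ProbabilityTheory Filter Finset
open scoped BigOperators Topology

noncomputable section

variable {m : ℕ}

lemma herm (C : Matrix (Fin m) (Fin m) ℝ) : (Cᵀ * C).IsHermitian := by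
  have := posSemidef_conjTranspose_mul_self C
  simpa using this.isHermitian

lemma eigsDesc_nonneg (C : Matrix (Fin m) (Fin m) ℝ) (i : Fin m) :
    0 ≤ eigsDesc (Cᵀ * C) i := by
  rw [eigsDesc, dif_pos (herm C)]
  have hpsd : (Cᵀ * C).PosSemidef := by
    have := posSemidef_conjTranspose_mul_self C
    simpa using this
  exact hpsd.eigenvalues_nonneg _

lemma svals_sq (C : Matrix (Fin m) (Fin m) ℝ) (i : Fin m) :
    svals C i ^ 2 = eigsDesc (Cᵀ * C) i :=
  Real.sq_sqrt (eigsDesc_nonneg C i)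

/-- sorted spectral data for `CᵀC`. -/
lemma spectral_data (C : Matrix (Fin m) (Fin m) ℝ) :
    ∃ v : Fin m → Fin m → ℝ,
      (∀ i j, v i ⬝ᵥ v j = if i = j then 1 else 0) ∧
      (∀ z : Fin m → ℝ, z = ∑ j, (v j ⬝ᵥ z) • v j) ∧
      (∀ i j, (C *ᵥ v i) ⬝ᵥ (C *ᵥ v j) = if i = j then (svals C i)^2 else 0) := by
  have hA := herm C
  set V : Matrix (Fin m) (Fin m) ℝ := (hA.eigenvectorUnitary : Matrix (Fin m) (Fin m) ℝ) with hV
  have hstar : star V = Vᵀ := by ext i j; simp [star]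
  have h1 : Vᵀ * V = 1 := by rw [← hstar]; exact mem_unitaryGroup_iff'.mp (hA.eigenvectorUnitary).2
  have h2 : V * Vᵀ = 1 := by rw [← hstar]; exact mem_unitaryGroup_iff.mp (hA.eigenvectorUnitary).2
  set π : Equiv.Perm (Fin m) := (Fin.revPerm).trans (Tuple.sort hA.eigenvalues) with hπ
  set v : Fin m → Fin m → ℝ := fun j i => V i (π j) with hv
  have heig : ∀ j, eigsDesc (Cᵀ * C) j = hA.eigenvalues (π j) := by
    intro j
    rw [eigsDesc, dif_pos hA]
    rfl
  -- orthonormality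
  have hon : ∀ i j, v i ⬝ᵥ v j = if i = j then 1 else 0 := by
    intro i j
    have : v i ⬝ᵥ v j = (Vᵀ * V) (π i) (π j) := by
      simp [dotProduct, Matrix.mul_apply, hv]
    rw [this, h1, Matrix.one_apply]
    simp [EmbeddingLike.apply_eq_iff_eq]
  -- completeness
  have hcomp : ∀ z : Fin m → ℝ, z = ∑ j, (v j ⬝ᵥ z) • v j := by
    intro z
    funext i
    have : ∑ j, (v j ⬝ᵥ z) • v j = ∑ j', ((fun i => V i j') ⬝ᵥ z) • (fun i => V i j') :=
      Equiv.sum_comp π (fun j' => ((fun i => V i j') ⬝ᵥ z) • (fun i : Fin m => V i j'))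
    rw [this]
    simp only [Finset.sum_apply, Pi.smul_apply, smul_eq_mul, dotProduct]
    calc z i = ∑ l, (V * Vᵀ) i l * z l := by
              rw [h2]; simp [Matrix.one_apply]
    _ = ∑ l, ∑ j', V i j' * V l j' * z l := by
              simp [Matrix.mul_apply, Finset.sum_mul]
    _ = ∑ j', (∑ l, V l j' * z l) * V i j' := by
              rw [Finset.sum_comm]
              congr 1; funext j'
              rw [Finset.sum_mul]
              congr 1; funext l; ring
  -- eigen equation
  have heq : ∀ j, (Cᵀ * C) *ᵥ v j = eigsDesc (Cᵀ * C) j • v j := by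
    intro j
    have hMV : (Cᵀ * C) * V = V * diagonal hA.eigenvalues := by
      have hst := hA.spectral_theorem
      have hd : diagonal (RCLike.ofReal ∘ hA.eigenvalues) = diagonal hA.eigenvalues := by
        congr 1
      rw [Unitary.conjStarAlgAut_apply, ← hV] at hst
      rw [hstar, hd] at hst
      calc (Cᵀ * C) * V = (V * diagonal hA.eigenvalues * Vᵀ) * V := by rw [← hst]
      _ = V * diagonal hA.eigenvalues * (Vᵀ * V) := by rw [mul_assoc]
      _ = V * diagonal hA.eigenvalues := by rw [h1, mul_one]
    funext i
    have : ((Cᵀ * C) *ᵥ v j) i = ((Cᵀ * C) * V) i (π j) := by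
      simp [Matrix.mulVec, Matrix.mul_apply, dotProduct, hv]
    rw [this, hMV, Matrix.mul_diagonal]
    simp [hv, heig j, mul_comm]
  -- conclusion
  refine ⟨v, hon, hcomp, ?_⟩
  intro i j
  have key : v i ⬝ᵥ ((Cᵀ * C) *ᵥ v j) = (C *ᵥ v i) ⬝ᵥ (C *ᵥ v j) := by
    rw [← Matrix.mulVec_mulVec, Matrix.dotProduct_mulVec (v i) Cᵀ, Matrix.vecMul_transpose]
  rw [← key, heq j, dotProduct_smul, hon i j]
  rw [svals_sq, heig]
  by_cases h : i = j <;> simp [h, heig, mul_comm]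



lemma dot_self_nonneg (z : Fin m → ℝ) : 0 ≤ z ⬝ᵥ z :=
  Finset.sum_nonneg fun i _ => mul_self_nonneg _

lemma dotProduct_finsum {ι : Type*} (s : Finset ι) (x : Fin m → ℝ) (f : ι → Fin m → ℝ) :
    x ⬝ᵥ (∑ i ∈ s, f i) = ∑ i ∈ s, x ⬝ᵥ f i := by
  simp only [dotProduct, Finset.sum_apply, Finset.mul_sum]
  exact Finset.sum_comm

lemma finsum_dotProduct {ι : Type*} (s : Finset ι) (x : Fin m → ℝ) (f : ι → Fin m → ℝ) :
    (∑ i ∈ s, f i) ⬝ᵥ x = ∑ i ∈ s, f i ⬝ᵥ x := by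
  rw [dotProduct_comm, dotProduct_finsum]
  simp [dotProduct_comm]

lemma bessel {ι : Type*} (s : Finset ι) (e : ι → Fin m → ℝ)
    (horth : ∀ i ∈ s, ∀ j ∈ s, i ≠ j → e i ⬝ᵥ e j = 0)
    (hnorm : ∀ i ∈ s, e i ⬝ᵥ e i ≤ 1) (x : Fin m → ℝ) :
    ∑ i ∈ s, (x ⬝ᵥ e i) ^ 2 ≤ x ⬝ᵥ x := by
  set c : ι → ℝ := fun i => x ⬝ᵥ e i with hc
  set S : Fin m → ℝ := ∑ i ∈ s, c i • e i with hS
  have h0 : 0 ≤ (x - S) ⬝ᵥ (x - S) := dot_self_nonneg _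
  have hxS : x ⬝ᵥ S = ∑ i ∈ s, (c i)^2 := by
    rw [hS, dotProduct_finsum]
    refine Finset.sum_congr rfl fun i _ => ?_
    rw [dotProduct_smul]
    simp [hc, pow_two, smul_eq_mul]
  have hSx : S ⬝ᵥ x = ∑ i ∈ s, (c i)^2 := by rw [dotProduct_comm]; exact hxS
  have hSS : S ⬝ᵥ S = ∑ i ∈ s, (c i)^2 * (e i ⬝ᵥ e i) := by
    rw [hS, finsum_dotProduct]
    refine Finset.sum_congr rfl fun i hi => ?_
    rw [dotProduct_finsum]
    rw [Finset.sum_eq_single_of_mem i hi]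
    · rw [smul_dotProduct, dotProduct_smul]
      simp [pow_two, smul_eq_mul]; ring
    · intro j hj hji
      rw [smul_dotProduct, dotProduct_smul, horth i hi j hj (fun hh => hji hh.symm)]
      simp
  have hexp : (x - S) ⬝ᵥ (x - S) = x ⬝ᵥ x - x ⬝ᵥ S - (S ⬝ᵥ x - S ⬝ᵥ S) := by
    rw [sub_dotProduct, dotProduct_sub, dotProduct_sub]
  have hle : ∑ i ∈ s, (c i)^2 * (e i ⬝ᵥ e i) ≤ ∑ i ∈ s, (c i)^2 :=
    Finset.sum_le_sum fun i hi => by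
      calc (c i)^2 * (e i ⬝ᵥ e i) ≤ (c i)^2 * 1 :=
            mul_le_mul_of_nonneg_left (hnorm i hi) (sq_nonneg _)
      _ = (c i)^2 := mul_one _
  rw [hexp, hxS, hSx, hSS] at h0
  linarith

lemma dot_CtC (C : Matrix (Fin m) (Fin m) ℝ) (x y : Fin m → ℝ) :
    x ⬝ᵥ ((Cᵀ * C) *ᵥ y) = (C *ᵥ x) ⬝ᵥ (C *ᵥ y) := by
  rw [← Matrix.mulVec_mulVec, Matrix.dotProduct_mulVec x Cᵀ, Matrix.vecMul_transpose]

lemma proj_contract {P : Matrix (Fin m) (Fin m) ℝ} (hP : Pᵀ = P) (hPi : P * P = P)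
    (a : Fin m → ℝ) : (P *ᵥ a) ⬝ᵥ (P *ᵥ a) ≤ a ⬝ᵥ a := by
  have h1 : (P *ᵥ a) ⬝ᵥ (P *ᵥ a) = a ⬝ᵥ (P *ᵥ a) := by
    rw [← dot_CtC P a a, hP, hPi]
  have hR : ((1 - P) *ᵥ a) ⬝ᵥ ((1 - P) *ᵥ a) = a ⬝ᵥ ((1 - P) *ᵥ a) := by
    rw [← dot_CtC (1 - P) a a]
    congr 2
    rw [transpose_sub, transpose_one, hP, mul_sub, sub_mul, sub_mul, hPi]
    simp
  have h2 : 0 ≤ a ⬝ᵥ ((1 - P) *ᵥ a) := hR ▸ dot_self_nonneg _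
  have h3 : a ⬝ᵥ ((1 - P) *ᵥ a) = a ⬝ᵥ a - a ⬝ᵥ (P *ᵥ a) := by
    rw [Matrix.sub_mulVec, dotProduct_sub, Matrix.one_mulVec]
  linarith

lemma card_filt {k : ℕ} (hkm : k ≤ m) :
    (Finset.univ.filter fun j : Fin m => (j : ℕ) < k).card = k := by
  have : (Finset.univ.filter fun j : Fin m => (j : ℕ) < k)
      = Finset.map (Fin.castLEEmb hkm) Finset.univ := by
    ext j
    simp only [Finset.mem_filter, Finset.mem_univ, true_and, Finset.mem_map,
      Fin.castLEEmb_apply]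
    constructor
    · intro hj; exact ⟨⟨j, hj⟩, rfl⟩
    · rintro ⟨a, rfl⟩; exact a.2.trans_le (le_refl _) |>.trans_le (le_refl _)
  rw [this, Finset.card_map]
  simp

lemma rearrange {k : ℕ} (hkm : k ≤ m) (σ c : Fin m → ℝ) (hσa : Antitone σ)
    (hσ0 : ∀ j, 0 ≤ σ j) (hc0 : ∀ j, 0 ≤ c j) (hc1 : ∀ j, c j ≤ 1)
    (hsum : ∑ j, c j ≤ (k : ℝ)) :
    ∑ j, σ j * c j ≤ ∑ j ∈ Finset.univ.filter (fun j : Fin m => (j : ℕ) < k), σ j := by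
  set s := Finset.univ.filter (fun j : Fin m => (j : ℕ) < k) with hs
  set t : ℝ := if h : k < m then σ ⟨k, h⟩ else 0 with ht
  have ht0 : 0 ≤ t := by
    rw [ht]; split_ifs with h
    · exact hσ0 _
    · exact le_refl 0
  have hst : ∀ j ∈ s, t ≤ σ j := by
    intro j hj
    rw [hs, Finset.mem_filter] at hj
    rw [ht]; split_ifs with h
    · exact hσa (show j ≤ ⟨k, h⟩ from Fin.le_def.mpr (le_of_lt hj.2))
    · exact hσ0 _
  have hts : ∀ j ∈ Finset.univ.filter (fun j : Fin m => ¬ (j : ℕ) < k), σ j ≤ t := by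
    intro j hj
    rw [Finset.mem_filter] at hj
    have hk : k ≤ (j : ℕ) := not_lt.mp hj.2
    have hkm' : k < m := lt_of_le_of_lt hk j.2
    rw [ht, dif_pos hkm']
    exact hσa (Fin.le_def.mpr hk)
  have scard : s.card = k := card_filt hkm
  have hsplit : ∑ j ∈ s, σ j * c j
      + ∑ j ∈ Finset.univ.filter (fun j : Fin m => ¬ (j : ℕ) < k), σ j * c j
      = ∑ j, σ j * c j := Finset.sum_filter_add_sum_filter_not _ _ _
  have hb2 : ∑ j ∈ Finset.univ.filter (fun j : Fin m => ¬ (j : ℕ) < k), σ j * c j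
      ≤ t * ((k : ℝ) - ∑ j ∈ s, c j) := by
    calc ∑ j ∈ Finset.univ.filter (fun j : Fin m => ¬ (j : ℕ) < k), σ j * c j
        ≤ ∑ j ∈ Finset.univ.filter (fun j : Fin m => ¬ (j : ℕ) < k), t * c j :=
          Finset.sum_le_sum fun j hj =>
            mul_le_mul_of_nonneg_right (hts j hj) (hc0 j)
      _ = t * ∑ j ∈ Finset.univ.filter (fun j : Fin m => ¬ (j : ℕ) < k), c j := by
          rw [Finset.mul_sum]
      _ ≤ t * ((k : ℝ) - ∑ j ∈ s, c j) := by
          apply mul_le_mul_of_nonneg_left _ ht0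
          have := Finset.sum_filter_add_sum_filter_not Finset.univ
            (fun j : Fin m => (j : ℕ) < k) c
          rw [hs]; linarith
  have hb3 : t * ((k : ℝ) - ∑ j ∈ s, c j) = ∑ j ∈ s, t * (1 - c j) := by
    rw [← Finset.mul_sum]
    congr 1
    rw [Finset.sum_sub_distrib, Finset.sum_const, scard, nsmul_eq_mul, mul_one]
  have hb4 : ∑ j ∈ s, t * (1 - c j) ≤ ∑ j ∈ s, σ j * (1 - c j) :=
    Finset.sum_le_sum fun j hj =>
      mul_le_mul_of_nonneg_right (hst j hj) (by linarith [hc1 j])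
  have hfin : ∑ j ∈ s, σ j * c j + ∑ j ∈ s, σ j * (1 - c j) = ∑ j ∈ s, σ j := by
    rw [← Finset.sum_add_distrib]
    exact Finset.sum_congr rfl fun j _ => by ring
  linarith

lemma svals_nonneg (C : Matrix (Fin m) (Fin m) ℝ) (i : Fin m) : 0 ≤ svals C i :=
  Real.sqrt_nonneg _

lemma eigsDesc_antitone (C : Matrix (Fin m) (Fin m) ℝ) : Antitone (eigsDesc (Cᵀ * C)) := by
  rw [eigsDesc, dif_pos (herm C)]
  intro i j hij
  exact Tuple.monotone_sort _ (Fin.rev_le_rev.mpr hij)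

lemma svals_antitone (C : Matrix (Fin m) (Fin m) ℝ) : Antitone (svals C) := by
  intro i j hij
  exact Real.sqrt_le_sqrt (eigsDesc_antitone C hij)

lemma hsymm_dot {M : Matrix (Fin m) (Fin m) ℝ} (hM : Mᵀ = M) (x a : Fin m → ℝ) :
    x ⬝ᵥ (M *ᵥ a) = (M *ᵥ x) ⬝ᵥ a := by
  rw [Matrix.dotProduct_mulVec, ← Matrix.mulVec_transpose, hM]

lemma mulVec_finsum (M : Matrix (Fin m) (Fin m) ℝ) {ι : Type*} (s : Finset ι)
    (f : ι → Fin m → ℝ) : M *ᵥ (∑ i ∈ s, f i) = ∑ i ∈ s, M *ᵥ f i := by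
  funext l
  simp only [Matrix.mulVec, dotProduct, Finset.sum_apply, Finset.mul_sum]
  exact Finset.sum_comm

lemma kyfan {k : ℕ} (hkm : k ≤ m) (P Q C : Matrix (Fin m) (Fin m) ℝ)
    (hP : Pᵀ = P) (hPidem : P * P = P) (hQ : Qᵀ = Q) (hQidem : Q * Q = Q) :
    ∑ i ∈ Finset.univ.filter (fun i : Fin m => (i : ℕ) < k), svals (P * C * Q) i
      ≤ ∑ j ∈ Finset.univ.filter (fun j : Fin m => (j : ℕ) < k), svals C j := by
  set B := P * C * Q with hB
  obtain ⟨z, hzo, hzc, hzB⟩ := spectral_data B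
  obtain ⟨v, hvo, hvc, hvC⟩ := spectral_data C
  set s := Finset.univ.filter (fun i : Fin m => (i : ℕ) < k) with hs
  set τ : Fin m → ℝ := svals B with hτ
  set σ : Fin m → ℝ := svals C with hσ
  set w : Fin m → Fin m → ℝ := fun i => (τ i)⁻¹ • (B *ᵥ z i) with hw
  set u : Fin m → Fin m → ℝ := fun j => (σ j)⁻¹ • (C *ᵥ v j) with hu
  have τnn : ∀ i, 0 ≤ τ i := fun i => svals_nonneg B i
  have σnn : ∀ j, 0 ≤ σ j := fun j => svals_nonneg C j
  -- f1
  have f1 : ∀ i, w i ⬝ᵥ (B *ᵥ z i) = τ i := by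
    intro i
    rw [hw]
    simp only [smul_dotProduct, smul_eq_mul]
    rw [hzB i i, if_pos rfl]
    rcases eq_or_ne (τ i) 0 with h | h
    · simp [h]
    · field_simp
  -- f2
  have f2o : ∀ i j, i ≠ j → w i ⬝ᵥ w j = 0 := by
    intro i j hij
    rw [hw]
    simp only [smul_dotProduct, dotProduct_smul, smul_eq_mul]
    rw [hzB i j, if_neg hij]
    ring
  have f2n : ∀ i, w i ⬝ᵥ w i ≤ 1 := by
    intro i
    rw [hw]
    simp only [smul_dotProduct, dotProduct_smul, smul_eq_mul]
    rw [hzB i i, if_pos rfl]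
    rcases eq_or_ne (τ i) 0 with h | h
    · simp [h]
    · apply le_of_eq
      field_simp
  -- f3
  have f3 : ∀ j, C *ᵥ v j = σ j • u j := by
    intro j
    rw [hu, smul_smul]
    rcases eq_or_ne (σ j) 0 with h | h
    · have h0 : (C *ᵥ v j) ⬝ᵥ (C *ᵥ v j) = 0 := by
        rw [hvC j j, if_pos rfl, h]; ring
      have : C *ᵥ v j = 0 := dotProduct_self_eq_zero.mp h0
      rw [this, smul_zero]
    · rw [mul_inv_cancel₀ h, one_smul]
  -- f4
  have f4o : ∀ i j, i ≠ j → u i ⬝ᵥ u j = 0 := by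
    intro i j hij
    rw [hu]
    simp only [smul_dotProduct, dotProduct_smul, smul_eq_mul]
    rw [hvC i j, if_neg hij]
    ring
  have f4n : ∀ j, u j ⬝ᵥ u j ≤ 1 := by
    intro j
    rw [hu]
    simp only [smul_dotProduct, dotProduct_smul, smul_eq_mul]
    rw [hvC j j, if_pos rfl]
    rcases eq_or_ne (σ j) 0 with h | h
    · simp [h]
    · apply le_of_eq
      field_simp
  set x : Fin m → Fin m → ℝ := fun i => P *ᵥ w i with hx
  set y : Fin m → Fin m → ℝ := fun i => Q *ᵥ z i with hy
  -- τ i = x i ⬝ᵥ (C *ᵥ y i)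
  have step1 : ∀ i, τ i = x i ⬝ᵥ (C *ᵥ y i) := by
    intro i
    have hBz : B *ᵥ z i = P *ᵥ (C *ᵥ (Q *ᵥ z i)) := by
      rw [hB, ← Matrix.mulVec_mulVec, ← Matrix.mulVec_mulVec]
    rw [← f1 i, hBz, hsymm_dot hP]
  -- expansion
  have step2 : ∀ i, x i ⬝ᵥ (C *ᵥ y i)
      = ∑ j, σ j * ((v j ⬝ᵥ y i) * (x i ⬝ᵥ u j)) := by
    intro i
    have hyi : C *ᵥ y i = ∑ j, (v j ⬝ᵥ y i) • (σ j • u j) := by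
      conv_lhs => rw [hvc (y i)]
      rw [mulVec_finsum]
      exact Finset.sum_congr rfl fun j _ => by rw [Matrix.mulVec_smul, f3 j]
    rw [hyi, dotProduct_finsum]
    refine Finset.sum_congr rfl fun j _ => ?_
    rw [dotProduct_smul, dotProduct_smul]
    simp only [smul_eq_mul]
    try ring
  set a : Fin m → ℝ := fun j => ∑ i ∈ s, (x i ⬝ᵥ u j) ^ 2 with ha
  set b : Fin m → ℝ := fun j => ∑ i ∈ s, (v j ⬝ᵥ y i) ^ 2 with hb'
  -- per-j bounds
  have ha1 : ∀ j, a j ≤ 1 := by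
    intro j
    have hxiu : ∀ i, x i ⬝ᵥ u j = (P *ᵥ u j) ⬝ᵥ w i := by
      intro i
      rw [hx]
      rw [← hsymm_dot hP (w i) (u j), dotProduct_comm]
    have : a j = ∑ i ∈ s, ((P *ᵥ u j) ⬝ᵥ w i) ^ 2 := by
      rw [ha]; exact Finset.sum_congr rfl fun i _ => by rw [hxiu i]
    rw [this]
    calc ∑ i ∈ s, ((P *ᵥ u j) ⬝ᵥ w i) ^ 2 ≤ (P *ᵥ u j) ⬝ᵥ (P *ᵥ u j) :=
          bessel s w (fun i _ j' _ hij => f2o i j' hij) (fun i _ => f2n i) _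
    _ ≤ u j ⬝ᵥ u j := proj_contract hP hPidem _
    _ ≤ 1 := f4n j
  have hb1 : ∀ j, b j ≤ 1 := by
    intro j
    have hvjy : ∀ i, v j ⬝ᵥ y i = (Q *ᵥ v j) ⬝ᵥ z i := by
      intro i; rw [hy, hsymm_dot hQ]
    have : b j = ∑ i ∈ s, ((Q *ᵥ v j) ⬝ᵥ z i) ^ 2 := by
      rw [hb']; exact Finset.sum_congr rfl fun i _ => by rw [hvjy i]
    rw [this]
    calc ∑ i ∈ s, ((Q *ᵥ v j) ⬝ᵥ z i) ^ 2 ≤ (Q *ᵥ v j) ⬝ᵥ (Q *ᵥ v j) :=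
          bessel s z (fun i _ j' _ hij => by rw [hzo i j', if_neg hij])
            (fun i _ => by rw [hzo i i, if_pos rfl]) _
    _ ≤ v j ⬝ᵥ v j := proj_contract hQ hQidem _
    _ ≤ 1 := by rw [hvo j j, if_pos rfl]
  have scard : s.card = k := card_filt hkm
  have hsuma : ∑ j, a j ≤ (k : ℝ) := by
    rw [ha]
    rw [Finset.sum_comm]
    calc ∑ i ∈ s, ∑ j, (x i ⬝ᵥ u j) ^ 2 ≤ ∑ i ∈ s, (1 : ℝ) := by
          refine Finset.sum_le_sum fun i _ => ?_
          calc ∑ j, (x i ⬝ᵥ u j) ^ 2 ≤ x i ⬝ᵥ x i :=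
                bessel Finset.univ u (fun p _ q _ hpq => f4o p q hpq) (fun p _ => f4n p) _
          _ = (P *ᵥ w i) ⬝ᵥ (P *ᵥ w i) := by rw [hx]
          _ ≤ w i ⬝ᵥ w i := proj_contract hP hPidem _
          _ ≤ 1 := f2n i
    _ = (k : ℝ) := by rw [Finset.sum_const, scard, nsmul_eq_mul, mul_one]
  have hsumb : ∑ j, b j ≤ (k : ℝ) := by
    rw [hb']
    rw [Finset.sum_comm]
    calc ∑ i ∈ s, ∑ j, (v j ⬝ᵥ y i) ^ 2 ≤ ∑ i ∈ s, (1 : ℝ) := by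
          refine Finset.sum_le_sum fun i _ => ?_
          have : ∑ j, (v j ⬝ᵥ y i) ^ 2 = ∑ j, (y i ⬝ᵥ v j) ^ 2 :=
            Finset.sum_congr rfl fun j _ => by rw [dotProduct_comm]
          rw [this]
          calc ∑ j, (y i ⬝ᵥ v j) ^ 2 ≤ y i ⬝ᵥ y i :=
                bessel Finset.univ v (fun p _ q _ hpq => by rw [hvo p q, if_neg hpq])
                  (fun p _ => by rw [hvo p p, if_pos rfl]) _
          _ = (Q *ᵥ z i) ⬝ᵥ (Q *ᵥ z i) := by rw [hy]
          _ ≤ z i ⬝ᵥ z i := proj_contract hQ hQidem _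
          _ ≤ 1 := by rw [hzo i i, if_pos rfl]
    _ = (k : ℝ) := by rw [Finset.sum_const, scard, nsmul_eq_mul, mul_one]
  set c : Fin m → ℝ := fun j => (a j + b j) / 2 with hcdef
  -- main chain
  have chain : ∑ i ∈ s, τ i ≤ ∑ j, σ j * c j := by
    calc ∑ i ∈ s, τ i = ∑ i ∈ s, ∑ j, σ j * ((v j ⬝ᵥ y i) * (x i ⬝ᵥ u j)) := by
          exact Finset.sum_congr rfl fun i _ => by rw [step1 i, step2 i]
    _ = ∑ j, ∑ i ∈ s, σ j * ((v j ⬝ᵥ y i) * (x i ⬝ᵥ u j)) := Finset.sum_comm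
    _ ≤ ∑ j, σ j * c j := by
          refine Finset.sum_le_sum fun j _ => ?_
          rw [← Finset.mul_sum]
          refine mul_le_mul_of_nonneg_left ?_ (σnn j)
          have : ∑ i ∈ s, (v j ⬝ᵥ y i) * (x i ⬝ᵥ u j)
              ≤ ∑ i ∈ s, ((x i ⬝ᵥ u j) ^ 2 + (v j ⬝ᵥ y i) ^ 2) / 2 := by
            refine Finset.sum_le_sum fun i _ => ?_
            nlinarith [sq_nonneg ((v j ⬝ᵥ y i) - (x i ⬝ᵥ u j))]
          calc ∑ i ∈ s, (v j ⬝ᵥ y i) * (x i ⬝ᵥ u j)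
              ≤ ∑ i ∈ s, ((x i ⬝ᵥ u j) ^ 2 + (v j ⬝ᵥ y i) ^ 2) / 2 := this
          _ = c j := by
              rw [hcdef, ha, hb']
              simp only [← Finset.sum_div, Finset.sum_add_distrib]
  have hrr : ∑ j, σ j * c j ≤ ∑ j ∈ s, σ j := by
    refine rearrange hkm σ c (svals_antitone C) σnn ?_ ?_ ?_
    · intro j
      rw [hcdef]
      have h1 : 0 ≤ a j := Finset.sum_nonneg fun i _ => sq_nonneg _
      have h2 : 0 ≤ b j := Finset.sum_nonneg fun i _ => sq_nonneg _
      linarith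
    · intro j
      rw [hcdef]
      have := ha1 j
      have := hb1 j
      linarith
    · have : ∑ j, c j = ((∑ j, a j) + (∑ j, b j)) / 2 := by
        rw [hcdef]
        rw [← Finset.sum_div, Finset.sum_add_distrib]
      rw [this]
      linarith
  exact le_trans chain hrr

lemma proj_trace_le {P : Matrix (Fin m) (Fin m) ℝ} (hP : Pᵀ = P) (hPidem : P * P = P) :
    P.trace ≤ (m : ℝ) := by
  have hdiag : ∀ i, P i i ≤ 1 := by
    intro i
    have h1 : P i i = ∑ j, P i j ^ 2 := by
      conv_lhs => rw [← hPidem]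
      rw [Matrix.mul_apply]
      refine Finset.sum_congr rfl fun j _ => ?_
      have hji : P j i = P i j := congrFun (congrFun hP i) j
      rw [hji]; ring
    have h2 : P i i ^ 2 ≤ ∑ j, P i j ^ 2 :=
      Finset.single_le_sum (f := fun j => P i j ^ 2) (fun j _ => sq_nonneg _)
        (Finset.mem_univ i)
    nlinarith [h1, h2]
  calc P.trace = ∑ i, P i i := by simp [Matrix.trace, Matrix.diag]
  _ ≤ ∑ _i : Fin m, (1 : ℝ) := Finset.sum_le_sum fun i _ => hdiag i
  _ = (m : ℝ) := by simp


/-- The weighted square Hausdorff distance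
`ð²(P,Q;C) = Σ_{i=1}^k 2(1 − σ_i(PCQ)/((1/k)Σ_{j=1}^k σ_j(C)))`
lies in `[0, 2k]`, for rank-`k` orthogonal projections `P, Q` and a matrix `C`
with `Σ_{j=1}^k σ_j(C) > 0`. -/
theorem weighted_hausdorff_bounds (m k : ℕ) (P Q C : Matrix (Fin m) (Fin m) ℝ)
    (hP : Pᵀ = P) (hPidem : P * P = P) (hPrank : P.trace = k)
    (hQ : Qᵀ = Q) (hQidem : Q * Q = Q) (hQrank : Q.trace = k)
    (hC : 0 < ∑ j ∈ Finset.univ.filter (fun j : Fin m => (j : ℕ) < k), svals C j) :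
    0 ≤ ∑ i ∈ Finset.univ.filter (fun i : Fin m => (i : ℕ) < k),
          (2 : ℝ) * (1 - svals (P * C * Q) i /
            ((1 / (k : ℝ)) *
              ∑ j ∈ Finset.univ.filter (fun j : Fin m => (j : ℕ) < k), svals C j))
    ∧ ∑ i ∈ Finset.univ.filter (fun i : Fin m => (i : ℕ) < k),
          (2 : ℝ) * (1 - svals (P * C * Q) i /
            ((1 / (k : ℝ)) *
              ∑ j ∈ Finset.univ.filter (fun j : Fin m => (j : ℕ) < k), svals C j))
        ≤ 2 * k := by
  have hk0 : k ≠ 0 := by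
    intro h
    subst h
    rw [Finset.filter_false_of_mem (fun j _ => by omega)] at hC
    simp at hC
  have hkpos : (0 : ℝ) < (k : ℝ) := by
    have := Nat.pos_of_ne_zero hk0
    exact_mod_cast this
  have hkm : k ≤ m := by
    have h1 : (k : ℝ) ≤ (m : ℝ) := hPrank ▸ proj_trace_le hP hPidem
    exact_mod_cast h1
  set s := Finset.univ.filter (fun j : Fin m => (j : ℕ) < k) with hs
  set S := ∑ j ∈ s, svals C j with hSdef
  have scard : s.card = k := card_filt hkm
  set D := (1 / (k : ℝ)) * S with hD
  have hDpos : 0 < D := by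
    rw [hD]
    exact mul_pos (by positivity) hC
  have hkD : (k : ℝ) * D = S := by
    rw [hD]
    field_simp
  have key : ∑ i ∈ s, svals (P * C * Q) i ≤ S :=
    kyfan hkm P Q C hP hPidem hQ hQidem
  set T := ∑ i ∈ s, svals (P * C * Q) i with hT
  have hTnn : 0 ≤ T := Finset.sum_nonneg fun i _ => svals_nonneg _ i
  have hsum_eq : ∑ i ∈ s, (2 : ℝ) * (1 - svals (P * C * Q) i / D)
      = 2 * k - (2 / D) * T := by
    have hterm : ∀ i ∈ s, (2 : ℝ) * (1 - svals (P * C * Q) i / D)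
        = 2 - (2 / D) * svals (P * C * Q) i := fun i _ => by ring
    rw [Finset.sum_congr rfl hterm, Finset.sum_sub_distrib, Finset.sum_const, scard,
      ← Finset.mul_sum, ← hT, nsmul_eq_mul]
    ring
  constructor
  · rw [hsum_eq]
    have h1 : (2 / D) * T ≤ (2 / D) * S :=
      mul_le_mul_of_nonneg_left key (by positivity)
    have h2 : (2 / D) * S = 2 * k := by
      rw [← hkD]
      field_simp
    linarith
  · rw [hsum_eq]
    have h3 : 0 ≤ (2 / D) * T := by positivity
    linarith
end
end

section
/- Let W ∈ R^{m×m} be orthogonal, let β be a nonzero real number, and let P, Q ∈ R^{m×m} be orthogonal projection matrices of rank k. Set C := β·W. Then every singular value of C equals |β|, WQWᵀ is an orthogonal projection matrix of rank k (the projection onto the image of the range of Q under W), σ_i(P C Q) = |β|·σ_i(P·(WQWᵀ)) for every i, and consequently the weighted square Hausdorff distance ð²(P,Q;C) := Σ_{i=1}^k 2·(1 − σ_i(P C Q)/((1/k)·Σ_{j=1}^k σ_j(C))) equals d²(P, WQWᵀ) := Σ_{i=1}^k 2·(1 − σ_i(P·(WQWᵀ))). -/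
open Matrix MeasureTheory ProbabilityTheory Filter Finset
open scoped BigOperators Topology

noncomputable section

section Aux
open Polynomial

lemma herm_of_transpose {m : ℕ} {M : Matrix (Fin m) (Fin m) ℝ} (h : Mᵀ = M) :
    M.IsHermitian := by
  unfold Matrix.IsHermitian
  rw [Matrix.conjTranspose]
  ext i j; simpa using congrFun (congrFun h i) j

lemma transpose_of_herm {m : ℕ} {M : Matrix (Fin m) (Fin m) ℝ} (h : M.IsHermitian) :
    Mᵀ = M := by
  have := h.eq
  rw [Matrix.conjTranspose] at this
  ext i j; simpa using congrFun (congrFun this i) j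

lemma charpoly_conj {m : ℕ} (U V M : Matrix (Fin m) (Fin m) ℝ) (h : U * V = 1) :
    (U * M * V).charpoly = M.charpoly := by
  unfold Matrix.charpoly
  have hmap : U.map (C : ℝ → ℝ[X]) * V.map C = 1 := by
    rw [← Matrix.map_mul, h]
    simp [Matrix.map_one]
  have hc : (U * M * V).charmatrix = U.map C * M.charmatrix * V.map C := by
    unfold Matrix.charmatrix
    rw [mul_sub, sub_mul]
    congr 1
    · rw [mul_assoc, (Matrix.scalar_commute (X : ℝ[X]) (fun r => Commute.all _ _) (V.map C)).eq,
        ← mul_assoc, hmap, one_mul]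
    · simp [Matrix.map_mul]
  rw [hc, Matrix.det_mul, Matrix.det_mul]
  have : (U.map (C : ℝ → ℝ[X])).det * (V.map C).det = 1 := by
    rw [← Matrix.det_mul, hmap, Matrix.det_one]
  calc (U.map C).det * M.charmatrix.det * (V.map C).det
      = (U.map C).det * (V.map C).det * M.charmatrix.det := by ring
    _ = M.charmatrix.det := by rw [this, one_mul]

lemma charpoly_diag {m : ℕ} (d : Fin m → ℝ) :
    (Matrix.diagonal d).charpoly = ∏ i, (X - C (d i)) := by
  rw [Matrix.charpoly_of_upperTriangular _ (Matrix.blockTriangular_diagonal d)]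
  simp

lemma charpoly_herm {m : ℕ} {M : Matrix (Fin m) (Fin m) ℝ} (hM : M.IsHermitian) :
    M.charpoly = ∏ i, (X - C (hM.eigenvalues i)) := by
  have hU : (hM.eigenvectorUnitary : Matrix (Fin m) (Fin m) ℝ) *
      star (hM.eigenvectorUnitary : Matrix (Fin m) (Fin m) ℝ) = 1 :=
    Matrix.mem_unitaryGroup_iff.mp hM.eigenvectorUnitary.2
  conv_lhs => rw [hM.spectral_theorem, Unitary.conjStarAlgAut_apply]
  rw [charpoly_conj _ _ _ hU]
  have : (RCLike.ofReal ∘ hM.eigenvalues : Fin m → ℝ) = hM.eigenvalues := by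
    funext i; simp
  rw [this, charpoly_diag]

lemma eigsDesc_eq_sorted {m : ℕ} {M : Matrix (Fin m) (Fin m) ℝ} (hM : M.IsHermitian)
    (f : Fin m → ℝ) (h : M.charpoly = ∏ i, (X - C (f i))) :
    eigsDesc M = fun i => (f ∘ Tuple.sort f) i.rev := by
  have key : hM.eigenvalues ∘ Tuple.sort hM.eigenvalues = f ∘ Tuple.sort f := by
    have hched : (∏ i, (X - C (hM.eigenvalues i))) = ∏ i, (X - C (f i)) := by
      rw [← charpoly_herm hM, h]
    have hmult : Multiset.map hM.eigenvalues Finset.univ.val =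
        Multiset.map f Finset.univ.val := by
      have r1 := Polynomial.roots_multiset_prod_X_sub_C
        (Multiset.map hM.eigenvalues Finset.univ.val)
      have r2 := Polynomial.roots_multiset_prod_X_sub_C (Multiset.map f Finset.univ.val)
      rw [← r1, ← r2]
      congr 1
      rw [Multiset.map_map, Multiset.map_map]
      simpa [Finset.prod, Multiset.map_map] using hched
    have hperm : (List.ofFn hM.eigenvalues).Perm (List.ofFn f) := by
      rw [← Multiset.coe_eq_coe]
      simpa [Fin.univ_val_map] using hmult
    apply List.ofFn_injective
    refine (fun hp h1 h2 => List.Perm.eq_of_sortedLE h1 h2 hp) ?_ ?_ ?_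
    · exact ((Equiv.Perm.ofFn_comp_perm _ _).trans hperm).trans
        (Equiv.Perm.ofFn_comp_perm _ _).symm
    · exact List.sortedLE_ofFn_iff.mpr (Tuple.monotone_sort _)
    · exact List.sortedLE_ofFn_iff.mpr (Tuple.monotone_sort _)
  unfold eigsDesc
  rw [dif_pos hM, key]

lemma eigsDesc_const {m : ℕ} (c : ℝ) (i : Fin m) :
    eigsDesc (c • (1 : Matrix (Fin m) (Fin m) ℝ)) i = c := by
  have hh : (c • (1 : Matrix (Fin m) (Fin m) ℝ)).IsHermitian := by
    apply herm_of_transpose; simp [Matrix.transpose_smul]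
  rw [eigsDesc_eq_sorted hh (fun _ => c)
    (by rw [Matrix.smul_one_eq_diagonal, charpoly_diag])]
  simp

lemma eigsDesc_conjW {m : ℕ} {W M : Matrix (Fin m) (Fin m) ℝ} (hW : W * Wᵀ = 1)
    (hM : M.IsHermitian) : eigsDesc (W * M * Wᵀ) = eigsDesc M := by
  have hN : (W * M * Wᵀ).IsHermitian := by
    apply herm_of_transpose
    rw [Matrix.transpose_mul, Matrix.transpose_mul, Matrix.transpose_transpose,
      transpose_of_herm hM, mul_assoc]
  rw [eigsDesc_eq_sorted hN hM.eigenvalues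
    (by rw [charpoly_conj _ _ _ hW]; exact charpoly_herm hM),
    eigsDesc_eq_sorted hM hM.eigenvalues (charpoly_herm hM)]

lemma eigsDesc_smul {m : ℕ} {c : ℝ} (hc : 0 ≤ c) {M : Matrix (Fin m) (Fin m) ℝ}
    (hM : M.IsHermitian) (i : Fin m) : eigsDesc (c • M) i = c * eigsDesc M i := by
  set f := hM.eigenvalues with hf
  have hcM : (c • M).IsHermitian := by
    apply herm_of_transpose
    rw [Matrix.transpose_smul, transpose_of_herm hM]
  have hspec : c • M = (hM.eigenvectorUnitary : Matrix (Fin m) (Fin m) ℝ) *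
      Matrix.diagonal (fun j => c * f j) *
      star (hM.eigenvectorUnitary : Matrix (Fin m) (Fin m) ℝ) := by
    conv_lhs => rw [hM.spectral_theorem, Unitary.conjStarAlgAut_apply]
    rw [← smul_mul_assoc, ← mul_smul_comm]
    congr 1
    rw [← Matrix.diagonal_smul]
    congr 1
  have hcp : (c • M).charpoly = ∏ j, (X - C (c * f j)) := by
    rw [hspec, charpoly_conj _ _ _ (Matrix.mem_unitaryGroup_iff.mp hM.eigenvectorUnitary.2),
      charpoly_diag]
  rw [eigsDesc_eq_sorted hcM (fun j => c * f j) hcp,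
    eigsDesc_eq_sorted hM f (charpoly_herm hM)]
  have hme : ((fun j => c * f j) ∘ (Tuple.sort (fun j => c * f j)))
      = (fun j => c * f j) ∘ Tuple.sort f := by
    symm
    rw [Tuple.comp_sort_eq_comp_iff_monotone]
    exact (Tuple.monotone_sort f).const_mul hc
  rw [hme]
  simp

end Aux

/-- (Isometry-corrective property of `ð²`.)
For `W` orthogonal, `β ≠ 0`, `C := β·W`, and rank-`k` orthogonal projections `P, Q`:
every singular value of `C` equals `|β|`; `WQWᵀ` is a rank-`k` orthogonal projection;
`σ_i(PCQ) = |β|·σ_i(P·(WQWᵀ))` for every `i`; and consequently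
`ð²(P,Q;C) = d²(P, WQWᵀ)`. -/
theorem isometry_corrective_property (m k : ℕ) (W P Q : Matrix (Fin m) (Fin m) ℝ) (β : ℝ)
    (hW : Wᵀ * W = 1) (hβ : β ≠ 0)
    (hP : Pᵀ = P) (hPidem : P * P = P) (hPrank : P.trace = k)
    (hQ : Qᵀ = Q) (hQidem : Q * Q = Q) (hQrank : Q.trace = k) :
    (∀ i : Fin m, svals (β • W) i = |β|) ∧
    ((W * Q * Wᵀ)ᵀ = W * Q * Wᵀ ∧ (W * Q * Wᵀ) * (W * Q * Wᵀ) = W * Q * Wᵀ ∧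
      (W * Q * Wᵀ).trace = (k : ℝ)) ∧
    (∀ i : Fin m, svals (P * (β • W) * Q) i = |β| * svals (P * (W * Q * Wᵀ)) i) ∧
    (∑ i ∈ Finset.univ.filter (fun i : Fin m => (i : ℕ) < k),
        (2 : ℝ) * (1 - svals (P * (β • W) * Q) i /
          ((1 / (k : ℝ)) *
            ∑ j ∈ Finset.univ.filter (fun j : Fin m => (j : ℕ) < k), svals (β • W) j))
      = ∑ i ∈ Finset.univ.filter (fun i : Fin m => (i : ℕ) < k),
          (2 : ℝ) * (1 - svals (P * (W * Q * Wᵀ)) i)) := by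
  have hWW : W * Wᵀ = 1 := mul_eq_one_comm.mp hW
  -- Part 1
  have part1 : ∀ i : Fin m, svals (β • W) i = |β| := by
    intro i
    have h1 : (β • W)ᵀ * (β • W) = (β * β) • (1 : Matrix (Fin m) (Fin m) ℝ) := by
      rw [Matrix.transpose_smul, smul_mul_assoc, mul_smul_comm, hW, smul_smul]
    rw [svals, h1, eigsDesc_const, Real.sqrt_mul_self_eq_abs]
  -- Part 2
  have h2a : (W * Q * Wᵀ)ᵀ = W * Q * Wᵀ := by
    rw [Matrix.transpose_mul, Matrix.transpose_mul, Matrix.transpose_transpose, hQ, ← mul_assoc]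
  have h2b : (W * Q * Wᵀ) * (W * Q * Wᵀ) = W * Q * Wᵀ := by
    have e : (W * Q * Wᵀ) * (W * Q * Wᵀ) = W * Q * (Wᵀ * W) * Q * Wᵀ := by
      noncomm_ring
    rw [e, hW, mul_one, mul_assoc W Q Q, hQidem]
  have h2c : (W * Q * Wᵀ).trace = (k : ℝ) := by
    rw [Matrix.trace_mul_cycle, hW, one_mul, hQrank]
  -- Part 3
  have hN : ((P * W * Q)ᵀ * (P * W * Q)).IsHermitian := by
    apply herm_of_transpose
    rw [Matrix.transpose_mul, Matrix.transpose_transpose]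
  have part3 : ∀ i : Fin m,
      svals (P * (β • W) * Q) i = |β| * svals (P * (W * Q * Wᵀ)) i := by
    intro i
    have hA1 : P * (β • W) * Q = β • (P * W * Q) := by
      rw [mul_smul_comm, smul_mul_assoc]
    have hL : (P * (β • W) * Q)ᵀ * (P * (β • W) * Q)
        = (β * β) • ((P * W * Q)ᵀ * (P * W * Q)) := by
      rw [hA1, Matrix.transpose_smul, smul_mul_assoc, mul_smul_comm, smul_smul]
    have hR : (P * (W * Q * Wᵀ))ᵀ * (P * (W * Q * Wᵀ))
        = W * ((P * W * Q)ᵀ * (P * W * Q)) * Wᵀ := by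
      have hB : P * (W * Q * Wᵀ) = (P * W * Q) * Wᵀ := by noncomm_ring
      rw [hB, Matrix.transpose_mul, Matrix.transpose_transpose]
      noncomm_ring
    rw [svals, svals, hL, hR, eigsDesc_conjW hWW hN,
      eigsDesc_smul (mul_self_nonneg β) hN,
      Real.sqrt_mul (mul_self_nonneg β), Real.sqrt_mul_self_eq_abs]
  refine ⟨part1, ⟨h2a, h2b, h2c⟩, part3, ?_⟩
  -- Part 4
  rcases Nat.eq_zero_or_pos k with hk | hk
  · subst hk
    simp
  · -- k ≤ m
    have hdiag : ∀ i, P i i = ∑ j, (P i j) ^ 2 := by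
      intro i
      conv_lhs => rw [← hPidem]
      rw [Matrix.mul_apply]
      refine Finset.sum_congr rfl fun j _ => ?_
      have : P j i = P i j := by
        conv_lhs => rw [← hP]
        rfl
      rw [this, sq]
    have hle1 : ∀ i, P i i ≤ 1 := by
      intro i
      have h1 : (P i i) ^ 2 ≤ P i i := by
        conv_rhs => rw [hdiag i]
        exact Finset.single_le_sum (f := fun j => (P i j) ^ 2) (fun j _ => sq_nonneg (P i j)) (Finset.mem_univ i)
      nlinarith [h1]
    have hkm : k ≤ m := by
      have : (k : ℝ) ≤ (m : ℝ) := by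
        rw [← hPrank, Matrix.trace]
        calc ∑ i, P.diag i ≤ ∑ i : Fin m, (1 : ℝ) :=
          Finset.sum_le_sum fun i _ => hle1 i
        _ = m := by simp
      exact_mod_cast this
    have hcard : (Finset.univ.filter (fun i : Fin m => (i : ℕ) < k)).card = k := by
      have : Finset.univ.filter (fun i : Fin m => (i : ℕ) < k)
          = Finset.map (Fin.castLEEmb hkm) Finset.univ := by
        ext i
        rw [Finset.mem_filter, Finset.mem_map]
        constructor
        · intro hi
          exact ⟨⟨i, hi.2⟩, Finset.mem_univ _, Fin.ext rfl⟩
        · rintro ⟨j, -, rfl⟩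
          exact ⟨Finset.mem_univ _, by simpa using j.2⟩
      rw [this, Finset.card_map, Finset.card_univ, Fintype.card_fin]
    have hkR : (k : ℝ) ≠ 0 := Nat.cast_ne_zero.mpr hk.ne'
    have habs : |β| ≠ 0 := abs_ne_zero.mpr hβ
    have hsum : ∑ j ∈ Finset.univ.filter (fun j : Fin m => (j : ℕ) < k), svals (β • W) j
        = (k : ℝ) * |β| := by
      rw [Finset.sum_congr rfl (fun j _ => part1 j), Finset.sum_const, hcard, nsmul_eq_mul]
    rw [hsum]
    have hdenom : (1 / (k : ℝ)) * ((k : ℝ) * |β|) = |β| := by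
      field_simp
    rw [hdenom]
    refine Finset.sum_congr rfl fun i _ => ?_
    have hx : |β| * (svals (P * (W * Q * Wᵀ)) i / |β|) = svals (P * (W * Q * Wᵀ)) i := by
      field_simp
    rw [part3 i, mul_div_assoc, hx]
end
end

section
/- Let (X^(i))_{i≥1} be i.i.d. random vectors in R^m with square-integrable entries and covariance matrix Cov(X) = α·I_m for some α > 0. For each n let X^(n) := [X^(1)|...|X^(n)] ∈ R^{m×n}, let H_n := I_n − (1/n)J_n, and let (P_n)_{n≥1} be ANY sequence of (random or deterministic) orthogonal projection matrices of rank k. Then almost surely, trace((1/(n−1))·P_n X^(n) H_n H_nᵀ X^(n)ᵀ P_nᵀ) → α·k as n → ∞. -/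
open Matrix MeasureTheory ProbabilityTheory Filter Finset
open scoped BigOperators Topology

noncomputable section

/-- Cross-covariance matrix `Cov(X,Y) = E[(X−EX)(Y−EY)ᵀ]` of two random
vectors in `R^m` (entrywise Bochner integrals). -/
def covMat {Ω : Type*} [MeasurableSpace Ω] (μ : Measure Ω) {m : ℕ}
    (X Y : Ω → Fin m → ℝ) : Matrix (Fin m) (Fin m) ℝ :=
  Matrix.of fun i j =>
    ∫ ω, (X ω i - ∫ ω', X ω' i ∂μ) * (Y ω j - ∫ ω', Y ω' j ∂μ) ∂μ

/-- The data matrix `[X^(1) | ... | X^(n)] ∈ R^{m×n}`. -/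
def dataMat {Ω : Type*} {m : ℕ} (X : ℕ → Ω → Fin m → ℝ) (n : ℕ) (ω : Ω) :
    Matrix (Fin m) (Fin n) ℝ :=
  Matrix.of fun i j => X (j : ℕ) ω i

/-- The `n × n` centering matrix `H_n = I_n − (1/n)J_n`. -/
def centering (n : ℕ) : Matrix (Fin n) (Fin n) ℝ :=
  1 - ((n : ℝ))⁻¹ • Matrix.of (fun _ _ => (1 : ℝ))

lemma aux_integrable_mul {Ω : Type*} [MeasurableSpace Ω] {μ : Measure Ω}
    {f g : Ω → ℝ} (hf : MemLp f 2 μ) (hg : MemLp g 2 μ) :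
    Integrable (fun ω => f ω * g ω) μ := by
  have h1 := (hf.add hg).integrable_sq
  have h2 := hf.integrable_sq
  have h3 := hg.integrable_sq
  have he : (fun ω => f ω * g ω)
      = fun ω => (((f ω + g ω) ^ 2 - f ω ^ 2) - g ω ^ 2) / 2 := by
    funext ω; ring
  rw [he]
  exact (((h1.sub h2).sub h3).div_const 2)

lemma aux_centering_entry {n : ℕ} (i j : Fin n) :
    centering n i j = (if i = j then (1:ℝ) else 0) - (n:ℝ)⁻¹ := by
  simp [centering, Matrix.one_apply]

lemma aux_centering_transpose (n : ℕ) : (centering n)ᵀ = centering n := by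
  ext i j
  simp [aux_centering_entry, Matrix.transpose_apply, eq_comm]

lemma aux_centering_idem {n : ℕ} (hn : n ≠ 0) :
    centering n * centering n = centering n := by
  have hc : (n:ℝ) ≠ 0 := Nat.cast_ne_zero.mpr hn
  ext i j
  rw [Matrix.mul_apply]
  simp only [aux_centering_entry]
  simp_rw [sub_mul, mul_sub, Finset.sum_sub_distrib]
  simp [Finset.sum_ite_eq, Finset.sum_ite_eq', Finset.card_univ, Finset.mul_sum,
    Finset.sum_const, ite_mul, mul_ite, mul_one, mul_zero, one_mul]
  field_simp
  simp

lemma aux_AHA_entry {m n : ℕ} (A : Matrix (Fin m) (Fin n) ℝ) (i j : Fin m) :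
    (A * centering n * Aᵀ) i j
      = (∑ l, A i l * A j l) - (n:ℝ)⁻¹ * (∑ l, A i l) * (∑ l, A j l) := by
  have hAH : ∀ l' : Fin n, (A * centering n) i l' = A i l' - (n:ℝ)⁻¹ * (∑ l, A i l) := by
    intro l'
    rw [Matrix.mul_apply]
    simp only [aux_centering_entry]
    simp_rw [mul_sub, Finset.sum_sub_distrib, mul_ite, mul_one, mul_zero]
    rw [Finset.sum_ite_eq' Finset.univ l' (fun l => A i l)]
    simp [Finset.sum_mul, mul_comm]
  rw [Matrix.mul_apply]
  simp only [Matrix.transpose_apply, hAH]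
  simp_rw [sub_mul, Finset.sum_sub_distrib]
  rw [← Finset.mul_sum]

lemma aux_proj_abs {m : ℕ} (Q : Matrix (Fin m) (Fin m) ℝ)
    (ht : Qᵀ = Q) (h2 : Q * Q = Q) (i j : Fin m) : |Q i j| ≤ 1 := by
  have hsym : ∀ a b, Q a b = Q b a := by
    intro a b; conv_lhs => rw [← ht, Matrix.transpose_apply]
  have hdiag : ∀ a : Fin m, Q a a = ∑ l, (Q a l) ^ 2 := by
    intro a
    conv_lhs => rw [← h2]
    rw [Matrix.mul_apply]
    refine Finset.sum_congr rfl fun l _ => ?_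
    rw [hsym l a]; ring
  have hsq : ∀ a b, (Q a b) ^ 2 ≤ Q a a := by
    intro a b
    rw [hdiag a]
    exact Finset.single_le_sum (f := fun l => (Q a l)^2) (fun l _ => sq_nonneg _) (Finset.mem_univ b)
  have hle1 : Q i i ≤ 1 := by nlinarith [hsq i i, sq_nonneg (Q i i - 1)]
  have h3 : (Q i j) ^ 2 ≤ 1 := le_trans (hsq i j) hle1
  exact (sq_le_one_iff_abs_le_one _).mp h3

lemma aux_trace_formula {m n : ℕ} (hn : n ≠ 0) (Q : Matrix (Fin m) (Fin m) ℝ)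
    (ht : Qᵀ = Q) (h2 : Q * Q = Q) (A : Matrix (Fin m) (Fin n) ℝ) :
    (Q * A * centering n * (centering n)ᵀ * Aᵀ * Qᵀ).trace
      = ∑ i, ∑ j, Q i j *
          ((∑ l, A j l * A i l) - (n:ℝ)⁻¹ * (∑ l, A j l) * (∑ l, A i l)) := by
  have hB : Q * A * centering n * (centering n)ᵀ * Aᵀ * Qᵀ
      = Q * (A * centering n * Aᵀ) * Q := by
    rw [ht, aux_centering_transpose]
    simp only [Matrix.mul_assoc]
    rw [← Matrix.mul_assoc (centering n) (centering n), aux_centering_idem hn]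
  rw [hB, Matrix.trace_mul_cycle, h2, Matrix.trace]
  refine Finset.sum_congr rfl fun i _ => ?_
  rw [Matrix.diag_apply, Matrix.mul_apply]
  refine Finset.sum_congr rfl fun j _ => ?_
  rw [aux_AHA_entry]

lemma aux_integral_expand {Ω : Type*} [MeasurableSpace Ω] (μ : Measure Ω)
    [IsProbabilityMeasure μ] {f g : Ω → ℝ} (hf : MemLp f 2 μ) (hg : MemLp g 2 μ) :
    ∫ ω, (f ω - ∫ ω', f ω' ∂μ) * (g ω - ∫ ω', g ω' ∂μ) ∂μ
      = (∫ ω, f ω * g ω ∂μ) - (∫ ω, f ω ∂μ) * (∫ ω, g ω ∂μ) := by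
  set a := ∫ ω', f ω' ∂μ
  set b := ∫ ω', g ω' ∂μ
  have hfg := aux_integrable_mul hf hg
  have hfi := hf.integrable one_le_two
  have hgi := hg.integrable one_le_two
  have he : (fun ω => (f ω - a) * (g ω - b))
      = fun ω => (f ω * g ω - b * f ω) - (a * g ω - a * b) := by
    funext ω; ring
  have hI1 : Integrable (fun ω => f ω * g ω - b * f ω) μ := hfg.sub (hfi.const_mul b)
  have hI2 : Integrable (fun ω => a * g ω - a * b) μ :=
    (hgi.const_mul a).sub (integrable_const (a * b))
  rw [he]
  rw [integral_sub hI1 hI2]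
  rw [integral_sub hfg (hfi.const_mul b), integral_sub (hgi.const_mul a) (integrable_const (a * b))]
  rw [MeasureTheory.integral_const_mul, MeasureTheory.integral_const_mul, integral_const, probReal_univ]
  simp only [ENNReal.toReal_one, smul_eq_mul, one_mul]
  ring

lemma aux_ratio_tendsto : Tendsto (fun n : ℕ => (n:ℝ) / ((n:ℝ) - 1)) atTop (𝓝 1) := by
  have h0 : Tendsto (fun n : ℕ => (n:ℝ) - 1) atTop atTop := by
    simpa [sub_eq_add_neg] using
      tendsto_atTop_add_const_right atTop (-1 : ℝ) tendsto_natCast_atTop_atTop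
  have h1 : Tendsto (fun n : ℕ => ((n:ℝ) - 1)⁻¹) atTop (𝓝 0) :=
    tendsto_inv_atTop_zero.comp h0
  have h2 : Tendsto (fun n : ℕ => 1 + ((n:ℝ) - 1)⁻¹) atTop (𝓝 (1 + 0)) :=
    tendsto_const_nhds.add h1
  rw [add_zero] at h2
  refine h2.congr' ?_
  filter_upwards [eventually_ge_atTop 2] with n hn
  have hne : (n:ℝ) - 1 ≠ 0 := by
    have : (2:ℝ) ≤ (n:ℝ) := by exact_mod_cast hn
    linarith
  field_simp
  ring

lemma aux_aemeasurable_pi {Ω : Type*} [MeasurableSpace Ω] {μ : Measure Ω} {m : ℕ}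
    {f : Ω → Fin m → ℝ} (h : ∀ i, AEMeasurable (fun ω => f ω i) μ) :
    AEMeasurable f μ := by
  choose g hg hfg using h
  refine ⟨fun ω i => g i ω, measurable_pi_iff.mpr fun i => hg i, ?_⟩
  have hall : ∀ᵐ ω ∂μ, ∀ i, f ω i = g i ω := ae_all_iff.mpr hfg
  filter_upwards [hall] with ω hω
  funext i; exact hω i

/-- (Lemma 2 of the paper, isotropic case.) For i.i.d. square-integrable
random vectors `X^(i)` with `Cov(X) = α·I_m` (`α > 0`), and ANY sequence of rank-`k`
orthogonal projections `P_n`, almost surely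
`trace((1/(n−1)) P_n X^(n)H_nH_nᵀX^(n)ᵀ P_nᵀ) → α·k`. -/
theorem trace_any_projection_tendsto_isotropic
    {Ω : Type*} [MeasurableSpace Ω] (μ : Measure Ω) [IsProbabilityMeasure μ]
    (m k : ℕ) (α : ℝ) (hα : 0 < α) (X : ℕ → Ω → Fin m → ℝ)
    (hindep : iIndepFun X μ)
    (hident : ∀ i, μ.map (X i) = μ.map (X 0))
    (hL2 : ∀ i j, MemLp (fun ω => X i ω j) 2 μ)
    (hcov : covMat μ (X 0) (X 0) = α • (1 : Matrix (Fin m) (Fin m) ℝ))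
    (P : ℕ → Ω → Matrix (Fin m) (Fin m) ℝ)
    (hproj : ∀ n ω, (P n ω)ᵀ = P n ω ∧ P n ω * P n ω = P n ω ∧ (P n ω).trace = (k : ℝ)) :
    ∀ᵐ ω ∂μ, Tendsto
      (fun n : ℕ =>
        (((n : ℝ) - 1)⁻¹ •
          (P n ω * dataMat X n ω * centering n * (centering n)ᵀ * (dataMat X n ω)ᵀ *
            (P n ω)ᵀ)).trace)
      atTop (nhds (α * k)) := by
  classical
  have hXm : ∀ l, AEMeasurable (X l) μ := fun l =>
    aux_aemeasurable_pi fun j => (hL2 l j).aestronglyMeasurable.aemeasurable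
  have hId : ∀ l, IdentDistrib (X l) (X 0) μ μ := fun l => ⟨hXm l, hXm 0, hident l⟩
  set E1 : Fin m → ℝ := fun i => ∫ ω, X 0 ω i ∂μ with hE1
  set E2 : Fin m → Fin m → ℝ := fun i j => ∫ ω, X 0 ω i * X 0 ω j ∂μ with hE2def
  have hSLLN2 : ∀ i j : Fin m, ∀ᵐ ω ∂μ,
      Tendsto (fun n : ℕ => (∑ l ∈ range n, X l ω i * X l ω j) / n) atTop (𝓝 (E2 i j)) := by
    intro i j
    have hg : Measurable (fun v : Fin m → ℝ => v i * v j) :=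
      (measurable_pi_apply i).mul (measurable_pi_apply j)
    exact strong_law_ae_real (fun l ω => X l ω i * X l ω j)
      (aux_integrable_mul (hL2 0 i) (hL2 0 j))
      (fun l l' hll' => ((hindep.indepFun hll').comp hg hg))
      (fun l => (hId l).comp hg)
  have hSLLN1 : ∀ i : Fin m, ∀ᵐ ω ∂μ,
      Tendsto (fun n : ℕ => (∑ l ∈ range n, X l ω i) / n) atTop (𝓝 (E1 i)) := by
    intro i
    have hg : Measurable (fun v : Fin m → ℝ => v i) := measurable_pi_apply i
    exact strong_law_ae_real (fun l ω => X l ω i)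
      ((hL2 0 i).integrable one_le_two)
      (fun l l' hll' => ((hindep.indepFun hll').comp hg hg))
      (fun l => (hId l).comp hg)
  have hae : ∀ᵐ ω ∂μ,
      (∀ i j, Tendsto (fun n : ℕ => (∑ l ∈ range n, X l ω i * X l ω j) / n) atTop (𝓝 (E2 i j)))
      ∧ (∀ i, Tendsto (fun n : ℕ => (∑ l ∈ range n, X l ω i) / n) atTop (𝓝 (E1 i))) := by
    refine Eventually.and ?_ ?_
    · rw [ae_all_iff]; intro i; rw [ae_all_iff]; intro j; exact hSLLN2 i j
    · rw [ae_all_iff]; exact hSLLN1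
  have hC : ∀ i j, E2 i j - E1 i * E1 j = α * (if i = j then (1:ℝ) else 0) := by
    intro i j
    have hE : covMat μ (X 0) (X 0) i j = E2 i j - E1 i * E1 j :=
      aux_integral_expand μ (hL2 0 i) (hL2 0 j)
    rw [← hE, hcov]
    simp [Matrix.smul_apply, Matrix.one_apply, smul_eq_mul]
  filter_upwards [hae] with ω hω
  obtain ⟨h2ω, h1ω⟩ := hω
  set Q : ℕ → Matrix (Fin m) (Fin m) ℝ := fun n => P n ω with hQdef
  have hQt : ∀ n, (Q n)ᵀ = Q n := fun n => (hproj n ω).1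
  have hQ2 : ∀ n, Q n * Q n = Q n := fun n => (hproj n ω).2.1
  have habs : ∀ n i j, |Q n i j| ≤ 1 := fun n => aux_proj_abs (Q n) (hQt n) (hQ2 n)
  set T : ℕ → Fin m → Fin m → ℝ := fun n i j =>
    ((n:ℝ) - 1)⁻¹ * ((∑ l ∈ range n, X l ω i * X l ω j)
      - (n:ℝ)⁻¹ * (∑ l ∈ range n, X l ω i) * (∑ l ∈ range n, X l ω j)) with hTdef
  have hTlim : ∀ i j, Tendsto (fun n => T n i j) atTop
      (𝓝 (α * (if i = j then (1:ℝ) else 0))) := by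
    intro i j
    have h1 : Tendsto (fun n : ℕ => ((n:ℝ)/((n:ℝ)-1)) *
        ((∑ l ∈ range n, X l ω i * X l ω j)/n
          - ((∑ l ∈ range n, X l ω i)/n) * ((∑ l ∈ range n, X l ω j)/n))) atTop
        (𝓝 (1 * (E2 i j - E1 i * E1 j))) :=
      aux_ratio_tendsto.mul ((h2ω i j).sub ((h1ω i).mul (h1ω j)))
    rw [one_mul, hC i j] at h1
    refine h1.congr' ?_
    filter_upwards [eventually_ge_atTop 2] with n hn
    have hn0 : (n:ℝ) ≠ 0 := Nat.cast_ne_zero.mpr (by omega)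
    have hn1 : (n:ℝ) - 1 ≠ 0 := by
      have : (2:ℝ) ≤ (n:ℝ) := by exact_mod_cast hn
      linarith
    simp only [hTdef]
    field_simp
  have hQsum : ∀ n, (∑ i, ∑ j, Q n i j * (α * (if j = i then (1:ℝ) else 0))) = α * k := by
    intro n
    have h1 : ∀ i, ∑ j, Q n i j * (α * (if j = i then (1:ℝ) else 0)) = Q n i i * α := by
      intro i
      rw [Finset.sum_eq_single i]
      · simp
      · intro b _ hb; simp [hb]
      · intro h; exact absurd (Finset.mem_univ i) h
    simp only [h1]
    have htr : ∑ i, Q n i i = (k:ℝ) := by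
      simpa [Matrix.trace, Matrix.diag] using (hproj n ω).2.2
    rw [← Finset.sum_mul, htr]
    ring
  have hform : ∀ᶠ n : ℕ in atTop,
      (((n : ℝ) - 1)⁻¹ •
        (P n ω * dataMat X n ω * centering n *
          (centering n)ᵀ * (dataMat X n ω)ᵀ *
          (P n ω)ᵀ)).trace
      = ∑ i, ∑ j, Q n i j * T n j i := by
    filter_upwards [eventually_ge_atTop 2] with n hn
    have hn0 : n ≠ 0 := by omega
    rw [Matrix.trace_smul,
      aux_trace_formula hn0 (Q n) (hQt n) (hQ2 n) (dataMat X n ω)]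
    rw [smul_eq_mul, Finset.mul_sum]
    refine Finset.sum_congr rfl fun i _ => ?_
    rw [Finset.mul_sum]
    refine Finset.sum_congr rfl fun j _ => ?_
    simp only [dataMat, Matrix.of_apply]
    rw [Fin.sum_univ_eq_sum_range (fun l => X l ω j * X l ω i) n,
      Fin.sum_univ_eq_sum_range (fun l => X l ω j) n,
      Fin.sum_univ_eq_sum_range (fun l => X l ω i) n]
    simp only [hTdef]
    ring
  refine Filter.Tendsto.congr' (Filter.EventuallyEq.symm hform) ?_
  rw [tendsto_iff_dist_tendsto_zero]
  have hdiff : Tendsto (fun n => ∑ i, ∑ j, |T n j i - α * (if j = i then (1:ℝ) else 0)|)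
      atTop (𝓝 0) := by
    have h := tendsto_finset_sum (Finset.univ (α := Fin m))
      (fun i _ => tendsto_finset_sum (Finset.univ (α := Fin m))
        (fun j _ => ((hTlim j i).sub (tendsto_const_nhds
          (x := α * (if j = i then (1:ℝ) else 0)))).abs))
    simpa using h
  refine squeeze_zero' (Eventually.of_forall fun n => dist_nonneg) ?_ hdiff
  refine Eventually.of_forall fun n => ?_
  rw [Real.dist_eq]
  have heq : (∑ i, ∑ j, Q n i j * T n j i) - α * k
      = ∑ i, ∑ j, Q n i j * (T n j i - α * (if j = i then (1:ℝ) else 0)) := by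
    rw [← hQsum n]
    simp only [mul_sub, Finset.sum_sub_distrib]
  rw [heq]
  refine le_trans (Finset.abs_sum_le_sum_abs _ _) ?_
  refine Finset.sum_le_sum fun i _ => le_trans (Finset.abs_sum_le_sum_abs _ _)
    (Finset.sum_le_sum fun j _ => ?_)
  rw [abs_mul]
  exact mul_le_of_le_one_left (abs_nonneg _) (habs n i j)
end
end
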